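/- Let f : ℝ^p → ℝ be differentiable and let K ⊆ ℝ^p be a subspace. Suppose for all θ₁, θ₂ ∈ K: f(θ₂) ≥ f(θ₁) + ⟨θ₂ − θ₁, ∇f(θ₁)⟩ + (α/2)‖θ₂ − θ₁‖² and f(θ₂) ≤ f(θ₁) + ⟨θ₂ − θ₁, ∇f(θ₁)⟩ + (L/2)‖θ₂ − θ₁‖², with 0 < α ≤ L. Fix θ₁ ∈ K, let u = P_K(θ₁ − ∇f(θ₁)/L) and let v be a minimizer of f over K. Then ‖u − v‖_2 ≤ √(1 − α/L) · ‖θ₁ − v‖_2. -/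

import Mathlib

open RealInnerProductSpace

/-- if `f` is differentiable, `α`-restricted strongly convex and `L`-restricted
smooth on a subspace `K` (with `0 < α ≤ L`), `θ₁ ∈ K`, `u = P_K(θ₁ − ∇f(θ₁)/L)`, and `v`
minimizes `f` over `K`, then `‖u − v‖ ≤ √(1 − α/L) ‖θ₁ − v‖`. -/
theorem stmt8 {p : ℕ} (f : EuclideanSpace ℝ (Fin p) → ℝ) (hf : Differentiable ℝ f)
    (K : Submodule ℝ (EuclideanSpace ℝ (Fin p))) (α L : ℝ) (hα : 0 < α) (hαL : α ≤ L)
    (hconv : ∀ θ₁ ∈ K, ∀ θ₂ ∈ K,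
      f θ₁ + ⟪θ₂ - θ₁, gradient f θ₁⟫ + α / 2 * ‖θ₂ - θ₁‖ ^ 2 ≤ f θ₂)
    (hsmooth : ∀ θ₁ ∈ K, ∀ θ₂ ∈ K,
      f θ₂ ≤ f θ₁ + ⟪θ₂ - θ₁, gradient f θ₁⟫ + L / 2 * ‖θ₂ - θ₁‖ ^ 2)
    (θ₁ : EuclideanSpace ℝ (Fin p)) (hθ₁ : θ₁ ∈ K)
    (v : EuclideanSpace ℝ (Fin p)) (hvK : v ∈ K) (hvmin : ∀ x ∈ K, f v ≤ f x) :
    ‖(K.orthogonalProjectionOnto (θ₁ - (1 / L) • gradient f θ₁) : EuclideanSpace ℝ (Fin p)) - v‖ ≤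
      Real.sqrt (1 - α / L) * ‖θ₁ - v‖ := by
  have hL : (0:ℝ) < L := hα.trans_le hαL
  set G : EuclideanSpace ℝ (Fin p) := gradient f θ₁ with hG
  set g : EuclideanSpace ℝ (Fin p) := (K.orthogonalProjectionOnto G : EuclideanSpace ℝ (Fin p))
    with hg
  have hgK : g ∈ K := (K.orthogonalProjectionOnto G).2
  have hperp : ∀ w ∈ K, ⟪w, G⟫ = ⟪w, g⟫ := by
    intro w hw
    have h0 : G - g ∈ Kᗮ := K.sub_starProjection_mem_orthogonal G
    have h1 : ⟪w, G - g⟫ = 0 := (Submodule.mem_orthogonal K _).1 h0 w hw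
    rw [inner_sub_right] at h1
    linarith
  set u : EuclideanSpace ℝ (Fin p) := θ₁ - (1/L) • g with hu
  have huK : u ∈ K := K.sub_mem hθ₁ (K.smul_mem _ hgK)
  have hproj : (K.orthogonalProjectionOnto (θ₁ - (1/L) • G) : EuclideanSpace ℝ (Fin p)) = u := by
    rw [map_sub, map_smul, Submodule.coe_sub, Submodule.coe_smul,
      (by exact K.starProjection_eq_self_iff.2 hθ₁ :
        ((K.orthogonalProjectionOnto θ₁ : K) : EuclideanSpace ℝ (Fin p)) = θ₁)]
  rw [hproj]
  -- abbreviations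
  set a : ℝ := ⟪θ₁ - v, g⟫ with ha
  set b : ℝ := ‖g‖ with hb
  set w : ℝ := ‖θ₁ - v‖ with hw
  -- strong convexity at v
  have h1 := hconv θ₁ hθ₁ v hvK
  rw [hperp (v - θ₁) (K.sub_mem hvK hθ₁)] at h1
  have hva : ⟪v - θ₁, g⟫ = -a := by
    rw [ha, ← inner_neg_left]; congr 1; abel
  have hnv : ‖v - θ₁‖ = w := by rw [hw, norm_sub_rev]
  rw [hva, hnv] at h1
  -- smoothness at u
  have h2 := hsmooth θ₁ hθ₁ u huK
  have huθ : u - θ₁ = -((1/L) • g) := by rw [hu]; abel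
  rw [hperp (u - θ₁) (K.sub_mem huK hθ₁)] at h2
  have hiu : ⟪u - θ₁, g⟫ = -(b^2/L) := by
    rw [huθ, inner_neg_left, real_inner_smul_left, real_inner_self_eq_norm_sq, hb]
    ring
  have hnu : ‖u - θ₁‖^2 = (1/L)^2 * b^2 := by
    rw [huθ, norm_neg, norm_smul, mul_pow, hb]
    norm_num [abs_of_pos hL]
  rw [hiu, hnu] at h2
  have h3 := hvmin u huK
  -- key inequality: 2a ≥ α w² + b²/L
  have key : α * w^2 + b^2 / L ≤ 2 * a := by
    have hb2 : L/2 * ((1/L)^2 * b^2) = b^2 / (2*L) := by field_simp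
    rw [hb2] at h2
    have : b^2 / (2*L) = (b^2/L)/2 := by ring
    rw [this] at h2
    nlinarith [h1, h2, h3]
  -- squared contraction
  have hexp : ‖u - v‖^2 = w^2 - 2*(1/L)*a + (1/L)^2 * b^2 := by
    have : u - v = (θ₁ - v) - (1/L) • g := by rw [hu]; abel
    rw [this, @norm_sub_sq_real, real_inner_smul_right, norm_smul, Real.norm_eq_abs,
      abs_of_pos (by positivity : (0:ℝ) < 1/L), ← ha, ← hw, ← hb]
    ring
  have hsq : ‖u - v‖^2 ≤ (1 - α/L) * w^2 := by
    rw [hexp]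
    have hc : (0:ℝ) < 1/L := by positivity
    have hmul := mul_le_mul_of_nonneg_left key hc.le
    have e1 : (1/L) * (α * w^2 + b^2/L) = (α/L) * w^2 + (1/L)^2 * b^2 := by ring
    have e2 : (1/L) * (2*a) = 2*(1/L)*a := by ring
    rw [e1, e2] at hmul
    linarith
  -- take square roots
  have h0 : (0:ℝ) ≤ (1 - α/L) := by
    have : α / L ≤ 1 := (div_le_one hL).2 hαL
    linarith
  calc ‖u - v‖ = Real.sqrt (‖u - v‖^2) := (Real.sqrt_sq (norm_nonneg _)).symm
    _ ≤ Real.sqrt ((1 - α/L) * w^2) := Real.sqrt_le_sqrt hsq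
    _ = Real.sqrt (1 - α/L) * w := by
        rw [Real.sqrt_mul h0, Real.sqrt_sq (norm_nonneg _)]
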